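/- Let φ be a linear operator on a finite-dimensional vector space V. Then for every ℓ ∈ ℕ, dim(ker φ^ℓ) = Σ_{i=0}^{ℓ−1} dim(ker φ ∩ im φ^i). -/
import Mathlib

lemma map_ker_pow_succ (K V : Type) [Field K] [AddCommGroup V] [Module K V]
    (φ : Module.End K V) (ℓ : ℕ) :
    Submodule.map (φ ^ ℓ) (LinearMap.ker (φ ^ (ℓ + 1))) =
      LinearMap.ker φ ⊓ LinearMap.range (φ ^ ℓ) := by
  ext y
  simp only [Submodule.mem_map, LinearMap.mem_ker, Submodule.mem_inf, LinearMap.mem_range]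
  constructor
  · rintro ⟨x, hx, rfl⟩
    refine ⟨?_, x, rfl⟩
    have := hx
    rwa [pow_succ', Module.End.mul_apply] at this
  · rintro ⟨h1, x, rfl⟩
    exact ⟨x, by rw [pow_succ', Module.End.mul_apply, h1], rfl⟩

theorem stmt2 (K V : Type) [Field K] [AddCommGroup V] [Module K V] [FiniteDimensional K V]
    (φ : Module.End K V) (ℓ : ℕ) :
    Module.finrank K (LinearMap.ker (φ ^ ℓ)) =
      ∑ i ∈ Finset.range ℓ,
        Module.finrank K ↥(LinearMap.ker φ ⊓ LinearMap.range (φ ^ i)) := by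
  induction ℓ with
  | zero =>
    have : LinearMap.ker ((1 : Module.End K V)) = ⊥ := LinearMap.ker_eq_bot.mpr fun a b h => h
    simp [this]
  | succ n ih =>
    rw [Finset.sum_range_succ, ← ih]
    set f := (φ ^ n).domRestrict (LinearMap.ker (φ ^ (n + 1))) with hf
    have hrn := LinearMap.finrank_range_add_finrank_ker f
    have hrange : LinearMap.range f =
        LinearMap.ker φ ⊓ LinearMap.range (φ ^ n) := by
      rw [hf, LinearMap.range_domRestrict, map_ker_pow_succ]
    have hle : LinearMap.ker (φ ^ n) ≤ LinearMap.ker (φ ^ (n + 1)) := by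
      intro x hx
      simp only [LinearMap.mem_ker] at hx ⊢
      rw [pow_succ', Module.End.mul_apply, hx, map_zero]
    have hker : LinearMap.ker f =
        Submodule.comap (LinearMap.ker (φ ^ (n + 1))).subtype (LinearMap.ker (φ ^ n)) := by
      ext x
      simp [hf, LinearMap.mem_ker]
    have hkerrank : Module.finrank K (LinearMap.ker f) =
        Module.finrank K (LinearMap.ker (φ ^ n)) := by
      rw [hker]
      exact (Submodule.comapSubtypeEquivOfLe hle).finrank_eq
    have hdom : Module.finrank K (LinearMap.ker (φ ^ (n + 1))) =
        Module.finrank K (LinearMap.range f) + Module.finrank K (LinearMap.ker f) := hrn.symm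
    rw [hdom, hkerrank, hrange, Nat.add_comm]
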